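/- The CI introduction rule is sound for K-relations over any nontrivial ⊕-positive commutative semiring K: for every K-relation R over a finite schema V with finite nonempty domains and pairwise disjoint X, Y, Z ⊆ V, if R satisfies the functional dependency X → Y, then R satisfies the conditional independence CI(X; Y, Z). -/
import Mathlib


/-! # Preliminaries: K-relations over semirings -/

open Finset

variable {V : Type*}

/-- A tuple over the finite set `X` of variables: it assigns to each variable
`a ∈ X` a value in its domain `Dom a`. -/
abbrev Tup (Dom : V → Type*) (X : Finset V) : Type _ :=
  ∀ a : X, Dom a

/-- Restriction `t[Y]` of a tuple `t` over `X` to a subset `Y ⊆ X`. -/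
def Tup.restrict {Dom : V → Type*} {X Y : Finset V} (h : Y ⊆ X) (t : Tup Dom X) :
    Tup Dom Y :=
  fun a => t ⟨a.1, h a.2⟩

open Classical in
/-- The marginal of a `K`-relation `R` over a schema `X` on a subset `Y ⊆ X`,
evaluated at a tuple `u` over `Y`: the sum of `R t` over all tuples `t` over `X`
with `t[Y] = u`. -/
noncomputable def margin {K : Type*} [CommSemiring K] [DecidableEq V]
    {Dom : V → Type*} [∀ a, Fintype (Dom a)] {X Y : Finset V}
    (R : Tup Dom X → K) (h : Y ⊆ X) (u : Tup Dom Y) : K :=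
  ∑ t : Tup Dom X, if Tup.restrict h t = u then R t else 0

open Classical in
/-- `c_S(u)`: the product of the marginal `S[Z]` over all tuples `v` in the
support of `S[Z]` different from `u` (empty products are `1`). -/
noncomputable def cfun {K : Type*} [CommSemiring K] [DecidableEq V]
    {Dom : V → Type*} [∀ a, Fintype (Dom a)] {Y Z : Finset V}
    (S : Tup Dom Y → K) (h : Z ⊆ Y) (u : Tup Dom Z) : K :=
  ∏ v : Tup Dom Z, if margin S h v ≠ 0 ∧ v ≠ u then margin S h v else 1

/-- The join `R ⋈ S` of a `K`-relation `R` over `X` and a `K`-relation `S` over `Y`,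
realized on the schema `T = X ∪ Y`:
`(R ⋈ S)(t) = R(t[X]) ⬝ S(t[Y]) ⬝ c_S(t[X ∩ Y])`. -/
noncomputable def joinOn {K : Type*} [CommSemiring K] [DecidableEq V]
    {Dom : V → Type*} [∀ a, Fintype (Dom a)] {X Y T : Finset V}
    (R : Tup Dom X → K) (S : Tup Dom Y → K)
    (hX : X ⊆ T) (hY : Y ⊆ T) (_hT : T ⊆ X ∪ Y) : Tup Dom T → K :=
  fun t =>
    R (Tup.restrict hX t) * S (Tup.restrict hY t) *
      cfun (Z := X ∩ Y) S Finset.inter_subset_right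
        (Tup.restrict ((Finset.inter_subset_right (s₁ := X)).trans hY) t)

/-- A `K`-relation `R` over the schema `S` satisfies the conditional independence
`CI(X; Y, Z)` (for `X, Y, Z ⊆ S`) if for every tuple `t` over `X ∪ Y ∪ Z`,
`R(t[X∪Y]) ⬝ R(t[X∪Z]) = R(t[X∪Y∪Z]) ⬝ R(t[X])`, all values being marginals of `R`. -/
def satCI {K : Type*} [CommSemiring K] [DecidableEq V]
    {Dom : V → Type*} [∀ a, Fintype (Dom a)] {S X Y Z : Finset V}
    (R : Tup Dom S → K) (hX : X ⊆ S) (hY : Y ⊆ S) (hZ : Z ⊆ S) : Prop :=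
  ∀ t : Tup Dom (X ∪ Y ∪ Z),
    margin R (Finset.union_subset hX hY) (Tup.restrict Finset.subset_union_left t) *
      margin R (Finset.union_subset hX hZ)
        (Tup.restrict (Finset.union_subset
          (Finset.subset_union_left.trans Finset.subset_union_left)
          Finset.subset_union_right) t) =
    margin R (Finset.union_subset (Finset.union_subset hX hY) hZ) t *
      margin R hX
        (Tup.restrict (Finset.subset_union_left.trans Finset.subset_union_left) t)

/-- A `K`-relation `R` over the schema `S` satisfies the functional dependency
`U → W` if any two tuples in the support of `R` agreeing on `U` agree on `W`. -/
def satFD {K : Type*} [Zero K] {Dom : V → Type*} {S U W : Finset V}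
    (R : Tup Dom S → K) (hU : U ⊆ S) (hW : W ⊆ S) : Prop :=
  ∀ t t' : Tup Dom S, R t ≠ 0 → R t' ≠ 0 →
    Tup.restrict hU t = Tup.restrict hU t' → Tup.restrict hW t = Tup.restrict hW t'

/-- Two `K`-relations over the same schema are equivalent (up to normalization),
`R ≡ R'`, if `aR = bR'` for some nonzero `a, b ∈ K`. -/
def equivRel {K : Type*} [CommSemiring K] {Dom : V → Type*} {X : Finset V}
    (R R' : Tup Dom X → K) : Prop :=
  ∃ a b : K, a ≠ 0 ∧ b ≠ 0 ∧ ∀ t, a * R t = b * R' t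

/-- `K` is `⊕`-positive: `a + b = 0` implies `a = b = 0`. -/
def plusPos (K : Type*) [CommSemiring K] : Prop :=
  ∀ a b : K, a + b = 0 → a = 0 ∧ b = 0

/-- `K` has no divisors of zero. -/
def noZD (K : Type*) [CommSemiring K] : Prop :=
  ∀ a b : K, a * b = 0 → a = 0 ∨ b = 0

/-- `K` is positive: `⊕`-positive and without zero divisors. -/
def posSemiring (K : Type*) [CommSemiring K] : Prop :=
  plusPos K ∧ noZD K

/-- `K` is multiplicatively cancellative. -/
def mulCanc (K : Type*) [CommSemiring K] : Prop :=
  ∀ a b c : K, a ≠ 0 → a * b = a * c → b = c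

/-- `K` is additively cancellative. -/
def addCanc (K : Type*) [CommSemiring K] : Prop :=
  ∀ a b c : K, a + b = a + c → b = c

/-- `K` is naturally totally ordered: the preorder `a ≤ b ↔ ∃ c, a + c = b`
is antisymmetric and total. -/
def natTotOrd (K : Type*) [CommSemiring K] : Prop :=
  (∀ a b : K, (∃ c, a + c = b) → (∃ c, b + c = a) → a = b) ∧
    (∀ a b : K, (∃ c, a + c = b) ∨ (∃ c, b + c = a))

/-- `K` is a semifield: every nonzero element has a multiplicative inverse. -/
def isSemifield (K : Type*) [CommSemiring K] : Prop :=
  ∀ a : K, a ≠ 0 → ∃ b, a * b = 1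

theorem subL [DecidableEq V] {X Y Z : Finset V} : X ⊆ X ∪ Y ∪ Z :=
  Finset.subset_union_left.trans Finset.subset_union_left

theorem subM [DecidableEq V] {X Y Z : Finset V} : Y ⊆ X ∪ Y ∪ Z :=
  Finset.subset_union_right.trans Finset.subset_union_left

theorem subR [DecidableEq V] {X Y Z : Finset V} : Z ⊆ X ∪ Y ∪ Z :=
  Finset.subset_union_right

theorem subXY [DecidableEq V] {X Y Z : Finset V} : X ∪ Y ⊆ X ∪ Y ∪ Z :=
  Finset.subset_union_left

theorem subXZ [DecidableEq V] {X Y Z : Finset V} : X ∪ Z ⊆ X ∪ Y ∪ Z :=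
  Finset.union_subset subL subR

theorem unionSplit [DecidableEq V] {X Y Z : Finset V} :
    X ∪ Y ∪ Z ⊆ (X ∪ Y) ∪ (X ∪ Z) := by
  intro a ha
  simp only [Finset.mem_union] at ha ⊢
  tauto


private lemma restrict_univ_union_eq_iff [DecidableEq V] [Fintype V]
    {Dom : V → Type*} {A B : Finset V}
    (s : Tup Dom (Finset.univ : Finset V)) (u : Tup Dom (A ∪ B)) :
    Tup.restrict (Finset.subset_univ (A ∪ B)) s = u ↔
      (Tup.restrict (Finset.subset_univ A) s =
        Tup.restrict Finset.subset_union_left u ∧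
       Tup.restrict (Finset.subset_univ B) s =
        Tup.restrict Finset.subset_union_right u) := by
  constructor
  · intro h
    constructor <;> funext a
    · exact congrFun h ⟨a.1, Finset.mem_union_left _ a.2⟩
    · exact congrFun h ⟨a.1, Finset.mem_union_right _ a.2⟩
  · rintro ⟨h1, h2⟩
    funext a
    rcases Finset.mem_union.mp a.2 with ha | ha
    · exact congrFun h1 ⟨a.1, ha⟩
    · exact congrFun h2 ⟨a.1, ha⟩

private lemma sum_ite_iff {K : Type*} [CommSemiring K] {α : Type*} [Fintype α]
    (R : α → K) (P Q : α → Prop) [DecidablePred P] [DecidablePred Q]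
    (h : ∀ s, R s ≠ 0 → (P s ↔ Q s)) :
    (∑ s, if P s then R s else 0) = ∑ s, if Q s then R s else 0 := by
  refine Finset.sum_congr rfl fun s _ => ?_
  by_cases hs : R s = 0
  · simp [hs]
  · exact if_congr (h s hs) rfl rfl

/-- CI introduction is sound for `K`-relations over any nontrivial `⊕`-positive
commutative semiring: an FD `X → Y` entails `CI(X; Y, Z)`. -/
theorem ciIntroduction_sound
    [DecidableEq V] [Fintype V] {Dom : V → Type*}
    [∀ a, Fintype (Dom a)] [∀ a, Nonempty (Dom a)]
    {K : Type*} [CommSemiring K] [Nontrivial K] (hpos : plusPos K)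
    {X Y Z : Finset V}
    (hXY : Disjoint X Y) (hXZ : Disjoint X Z) (hYZ : Disjoint Y Z)
    (R : Tup Dom (Finset.univ : Finset V) → K)
    (hfd : satFD R (Finset.subset_univ X) (Finset.subset_univ Y)) :
    satCI R (Finset.subset_univ X) (Finset.subset_univ Y) (Finset.subset_univ Z) := by
  classical
  intro t
  set CX : Tup Dom (Finset.univ : Finset V) → Prop := fun s =>
    Tup.restrict (Finset.subset_univ X) s = Tup.restrict subL t with hCX
  set CY : Tup Dom (Finset.univ : Finset V) → Prop := fun s =>
    Tup.restrict (Finset.subset_univ Y) s = Tup.restrict subM t with hCY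
  set CZ : Tup Dom (Finset.univ : Finset V) → Prop := fun s =>
    Tup.restrict (Finset.subset_univ Z) s = Tup.restrict subR t with hCZ
  have iXY : ∀ s, (Tup.restrict (Finset.subset_univ (X ∪ Y)) s =
      Tup.restrict (subXY (Z := Z)) t) ↔ (CX s ∧ CY s) := fun s =>
    restrict_univ_union_eq_iff s _
  have iXZ : ∀ s, (Tup.restrict (Finset.subset_univ (X ∪ Z)) s =
      Tup.restrict (subXZ (Y := Y)) t) ↔ (CX s ∧ CZ s) := fun s =>
    restrict_univ_union_eq_iff s _
  have iXYZ : ∀ s, (Tup.restrict (Finset.subset_univ (X ∪ Y ∪ Z)) s = t) ↔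
      ((CX s ∧ CY s) ∧ CZ s) := fun s =>
    (restrict_univ_union_eq_iff s t).trans
      (and_congr_left' (restrict_univ_union_eq_iff s _))
  have eXY : margin R (Finset.union_subset (Finset.subset_univ X)
        (Finset.subset_univ Y)) (Tup.restrict (subXY (Z := Z)) t) =
      ∑ s : Tup Dom (Finset.univ : Finset V), if CX s ∧ CY s then R s else 0 := by
    unfold margin
    exact Finset.sum_congr rfl fun s _ => if_congr (iXY s) rfl rfl
  have eXZ : margin R (Finset.union_subset (Finset.subset_univ X)
        (Finset.subset_univ Z)) (Tup.restrict (subXZ (Y := Y)) t) =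
      ∑ s : Tup Dom (Finset.univ : Finset V), if CX s ∧ CZ s then R s else 0 := by
    unfold margin
    exact Finset.sum_congr rfl fun s _ => if_congr (iXZ s) rfl rfl
  have eXYZ : margin R (Finset.union_subset (Finset.union_subset
        (Finset.subset_univ X) (Finset.subset_univ Y)) (Finset.subset_univ Z)) t =
      ∑ s : Tup Dom (Finset.univ : Finset V), if (CX s ∧ CY s) ∧ CZ s then R s else 0 := by
    unfold margin
    exact Finset.sum_congr rfl fun s _ => if_congr (iXYZ s) rfl rfl
  have eX : margin R (Finset.subset_univ X) (Tup.restrict (subL (Y := Y) (Z := Z)) t) =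
      ∑ s : Tup Dom (Finset.univ : Finset V), if CX s then R s else 0 := rfl
  rw [eXY, eXZ, eXYZ, eX]
  by_cases hcase : ∃ s, R s ≠ 0 ∧ CX s ∧ CY s
  · obtain ⟨s0, hs0, hs0X, hs0Y⟩ := hcase
    have fdY : ∀ s, R s ≠ 0 → CX s → CY s := by
      intro s hs hsX
      have hx : Tup.restrict (Finset.subset_univ X) s =
          Tup.restrict (Finset.subset_univ X) s0 := hsX.trans hs0X.symm
      have := hfd s s0 hs hs0 hx
      exact this.trans hs0Y
    have h1 : (∑ s : Tup Dom (Finset.univ : Finset V), if CX s ∧ CY s then R s else 0)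
        = ∑ s : Tup Dom (Finset.univ : Finset V), if CX s then R s else 0 :=
      sum_ite_iff R _ _ fun s hs => ⟨fun h => h.1, fun h => ⟨h, fdY s hs h⟩⟩
    have h2 : (∑ s : Tup Dom (Finset.univ : Finset V), if (CX s ∧ CY s) ∧ CZ s then R s else 0)
        = ∑ s : Tup Dom (Finset.univ : Finset V), if CX s ∧ CZ s then R s else 0 :=
      sum_ite_iff R _ _ fun s hs =>
        ⟨fun h => ⟨h.1.1, h.2⟩, fun h => ⟨⟨h.1, fdY s hs h.1⟩, h.2⟩⟩
    rw [h1, h2, mul_comm]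
  · have z1 : (∑ s : Tup Dom (Finset.univ : Finset V), if CX s ∧ CY s then R s else 0) = 0 :=
      Finset.sum_eq_zero fun s _ => by
        split_ifs with h
        · by_contra hne; exact hcase ⟨s, hne, h⟩
        · rfl
    have z2 : (∑ s : Tup Dom (Finset.univ : Finset V), if (CX s ∧ CY s) ∧ CZ s then R s else 0) = 0 :=
      Finset.sum_eq_zero fun s _ => by
        split_ifs with h
        · by_contra hne; exact hcase ⟨s, hne, h.1⟩
        · rfl
    rw [z1, z2, zero_mul, zero_mul]
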